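/- arXiv:2102.00090 — 4 statements merged into one kernel-verified Lean document; each statement's English description precedes it below -/
import Mathlib

section
/- If f ∈ 𝔚ₙ, then f^{(k)} ∈ L¹(ℝ) and the Fourier transform of f^{(k)} is in L¹(ℝ) for every k = 1, …, n. -/
open MeasureTheory Filter Asymptotics
open scoped FourierTransform

/-- Membership in the class `𝔚ₙ`. -/
def MemW (n : ℕ) (f : ℝ → ℂ) : Prop :=
  ContDiff ℝ n f ∧
  Tendsto f (cocompact ℝ) (nhds 0) ∧
  (iteratedDeriv n f) =o[cocompact ℝ] (fun x : ℝ => |x| ^ (-(n : ℝ))) ∧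
  (∀ k : ℕ, 1 ≤ k → k ≤ n →
    Integrable (fun x : ℝ => (1 + |x|) ^ (k - 1) * ‖iteratedDeriv k f x‖)
      (volume : Measure ℝ)) ∧
  Integrable (𝓕 (iteratedDeriv n f)) (volume : Measure ℝ)

open Complex Real in
/-- If `f ∈ 𝔚ₙ`, then `f⁽ᵏ⁾ ∈ L¹(ℝ)` and the Fourier transform of `f⁽ᵏ⁾`
is in `L¹(ℝ)` for every `k = 1, …, n`. -/
theorem deriv_and_fourier_integrable_of_memW (n : ℕ) (f : ℝ → ℂ) (hf : MemW n f) :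
    ∀ k : ℕ, 1 ≤ k → k ≤ n →
      Integrable (iteratedDeriv k f) (volume : Measure ℝ) ∧
      Integrable (𝓕 (iteratedDeriv k f)) (volume : Measure ℝ) := by
  obtain ⟨hsmooth, -, -, hweight, hFn⟩ := hf
  -- integrability of every derivative of order 1 ≤ j ≤ n
  have hint : ∀ j : ℕ, 1 ≤ j → j ≤ n → Integrable (iteratedDeriv j f) (volume : Measure ℝ) := by
    intro j hj1 hjn
    have hcont : Continuous (iteratedDeriv j f) :=
      hsmooth.continuous_iteratedDeriv j (by exact_mod_cast hjn)
    refine (hweight j hj1 hjn).mono hcont.aestronglyMeasurable (ae_of_all _ fun x => ?_)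
    have h1 : (1 : ℝ) ≤ (1 + |x|) ^ (j - 1) :=
      one_le_pow₀ (by simp [abs_nonneg x])
    have hnn : (0 : ℝ) ≤ (1 + |x|) ^ (j - 1) * ‖iteratedDeriv j f x‖ :=
      mul_nonneg (by positivity) (norm_nonneg _)
    rw [Real.norm_of_nonneg hnn]
    exact le_mul_of_one_le_left (norm_nonneg _) h1
  intro k hk1 hkn
  refine ⟨hint k hk1 hkn, ?_⟩
  -- the key relation between Fourier transforms of derivatives
  have key : ∀ m : ℕ, k + m ≤ n →
      𝓕 (iteratedDeriv (k + m) f)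
        = fun ξ : ℝ => (2 * π * I * ξ) ^ m • 𝓕 (iteratedDeriv k f) ξ := by
    intro m
    induction m with
    | zero => intro _; simp
    | succ m ih =>
      intro hm
      have hm' : k + m ≤ n := by omega
      have hkm1 : 1 ≤ k + m := by omega
      have hdiff : Differentiable ℝ (iteratedDeriv (k + m) f) :=
        hsmooth.differentiable_iteratedDeriv (k + m) (by exact_mod_cast (by omega : k + m < n))
      have hstep : 𝓕 (deriv (iteratedDeriv (k + m) f))
          = fun ξ : ℝ => (2 * π * I * ξ) • 𝓕 (iteratedDeriv (k + m) f) ξ :=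
        Real.fourier_deriv (hint (k + m) hkm1 hm') hdiff
          (by rw [← iteratedDeriv_succ]; exact hint (k + m + 1) (by omega) (by omega))
      have : k + (m + 1) = (k + m) + 1 := by omega
      rw [this, iteratedDeriv_succ, hstep, ih hm']
      funext ξ
      simp only [smul_eq_mul]
      ring
  have hrel : 𝓕 (iteratedDeriv n f)
      = fun ξ : ℝ => (2 * π * I * ξ) ^ (n - k) • 𝓕 (iteratedDeriv k f) ξ := by
    have := key (n - k) (by omega)
    rwa [show k + (n - k) = n by omega] at this
  -- continuity of 𝓕 f⁽ᵏ⁾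
  have hc : Continuous (𝓕 (iteratedDeriv k f)) :=
    VectorFourier.fourierIntegral_continuous Real.continuous_fourierChar
      (by exact continuous_inner) (hint k hk1 hkn)
  -- split ℝ into [-1,1] and its complement
  have h1 : IntegrableOn (𝓕 (iteratedDeriv k f)) (Set.Icc (-1 : ℝ) 1) :=
    hc.continuousOn.integrableOn_compact isCompact_Icc
  have h2 : IntegrableOn (𝓕 (iteratedDeriv k f)) (Set.Icc (-1 : ℝ) 1)ᶜ := by
    refine Integrable.mono (hFn.restrict (s := (Set.Icc (-1 : ℝ) 1)ᶜ)) hc.aestronglyMeasurable.restrict ?_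
    refine (ae_restrict_iff' measurableSet_Icc.compl).2 (ae_of_all _ fun ξ hξ => ?_)
    have habs : (1 : ℝ) ≤ |ξ| := by
      simp only [Set.mem_compl_iff, Set.mem_Icc, not_and_or, not_le] at hξ
      rcases hξ with h | h
      · rw [abs_of_neg (by linarith)]; linarith
      · rw [abs_of_pos (by linarith)]; linarith
    rw [hrel]
    have hnorm : ‖(2 * π * I * (ξ : ℂ)) ^ (n - k)‖ = (2 * π * |ξ|) ^ (n - k) := by
      rw [norm_pow]
      have : ‖2 * π * I * (ξ : ℂ)‖ = 2 * π * |ξ| := by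
        simp [norm_mul, Complex.norm_real, Real.norm_eq_abs, abs_of_pos Real.pi_pos,
          abs_of_pos (by norm_num : (0:ℝ) < 2)]
      rw [this]
    have hone : (1 : ℝ) ≤ (2 * π * |ξ|) ^ (n - k) := by
      apply one_le_pow₀
      nlinarith [Real.pi_gt_three]
    calc ‖𝓕 (iteratedDeriv k f) ξ‖
        ≤ (2 * π * |ξ|) ^ (n - k) * ‖𝓕 (iteratedDeriv k f) ξ‖ :=
          le_mul_of_one_le_left (norm_nonneg _) hone
      _ = ‖(2 * π * I * (ξ : ℂ)) ^ (n - k) • 𝓕 (iteratedDeriv k f) ξ‖ := by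
          rw [norm_smul, hnorm]
  have : IntegrableOn (𝓕 (iteratedDeriv k f)) (Set.Icc (-1 : ℝ) 1 ∪ (Set.Icc (-1 : ℝ) 1)ᶜ) :=
    h1.union h2
  rwa [Set.union_compl_self, integrableOn_univ] at this
end

section
/- Let f ∈ 𝔚ₙ. Then for each k = 1, …, n−1 the function x ↦ f^{(k)}(x)(x−i)^k belongs to C₀(ℝ), i.e., it is continuous and tends to 0 at ±∞. -/
open MeasureTheory Filter Asymptotics Complex Set
open scoped FourierTransform

lemma aux_limit_zero (g : ℝ → ℂ) (h : ℝ → ℝ) (hh : Integrable h)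
    (hb : ∀ x, ‖g x‖ ≤ (1 + |x|) * h x) {L : ℂ}
    (hg : Tendsto g atTop (nhds L)) : L = 0 := by
  by_contra hL
  have hLpos : (0:ℝ) < ‖L‖ := norm_pos_iff.2 hL
  have : ∀ᶠ x in atTop, ‖L‖ / 2 ≤ ‖g x‖ := by
    have := (hg.norm).eventually (eventually_ge_nhds (show ‖L‖/2 < ‖L‖ by linarith))
    exact this
  obtain ⟨M, hM⟩ := eventually_atTop.1 this
  set A : ℝ := max M 1 with hA
  have key : IntegrableOn (fun x : ℝ => x⁻¹) (Ioi A) := by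
    have hint : IntegrableOn (fun x => 4 / ‖L‖ * h x) (Ioi A) :=
      (hh.const_mul _).integrableOn
    refine hint.mono' (measurable_inv.aestronglyMeasurable) ?_
    filter_upwards [ae_restrict_mem measurableSet_Ioi] with x hx
    have hx1 : (1:ℝ) ≤ x := (le_max_right M 1).trans (le_of_lt hx)
    have hxM : M ≤ x := (le_max_left M 1).trans (le_of_lt hx)
    have h1 : ‖L‖ / 2 ≤ ‖g x‖ := hM x hxM
    have h2 : ‖g x‖ ≤ (1 + |x|) * h x := hb x
    have habs : |x| = x := abs_of_pos (lt_of_lt_of_le one_pos hx1)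
    have h3 : ‖L‖ / 2 ≤ (1 + x) * h x := by rw [habs] at h2; linarith
    have hxpos : 0 < x := lt_of_lt_of_le one_pos hx1
    have h4 : (1 + x) ≤ 2 * x := by linarith
    have hhx : 0 ≤ h x := by
      by_contra hc
      push_neg at hc
      nlinarith
    have h5 : ‖L‖ / 2 ≤ 2 * x * h x := le_trans h3 (by nlinarith)
    rw [Real.norm_eq_abs, abs_of_pos (inv_pos.2 hxpos)]
    rw [inv_le_iff_one_le_mul₀ hxpos]
    have : ‖L‖ ≤ 4 * x * h x := by nlinarith
    have h6 : 1 ≤ 4 * x * h x / ‖L‖ := (one_le_div hLpos).2 this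
    calc (1:ℝ) ≤ 4 * x * h x / ‖L‖ := h6
      _ = 4 / ‖L‖ * h x * x := by ring
  exact not_IntegrableOn_Ioi_inv key

lemma aux_limit_exists (g : ℝ → ℂ) (g' : ℝ → ℂ)
    (hd : ∀ x, HasDerivAt g (g' x) x) (hi : Integrable g') :
    (∃ L, Tendsto g atTop (nhds L)) ∧ (∃ L, Tendsto g atBot (nhds L)) := by
  have hftc : ∀ a b : ℝ, ∫ x in a..b, g' x = g b - g a := fun a b =>
    intervalIntegral.integral_eq_sub_of_hasDerivAt (fun x _ => hd x)
      hi.intervalIntegrable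
  constructor
  · refine ⟨g 0 + ∫ x in Ioi (0:ℝ), g' x, ?_⟩
    have h1 : Tendsto (fun b : ℝ => ∫ x in (0:ℝ)..b, g' x) atTop
        (nhds (∫ x in Ioi (0:ℝ), g' x)) :=
      intervalIntegral_tendsto_integral_Ioi 0 hi.integrableOn tendsto_id
    have := h1.const_add (g 0)
    refine this.congr fun b => ?_
    rw [hftc 0 b]; ring
  · refine ⟨g 0 - ∫ x in Iic (0:ℝ), g' x, ?_⟩
    have h1 : Tendsto (fun a : ℝ => ∫ x in a..(0:ℝ), g' x) atBot
        (nhds (∫ x in Iic (0:ℝ), g' x)) :=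
      intervalIntegral_tendsto_integral_Iic 0 hi.integrableOn tendsto_id
    have h2 := h1.const_sub (g 0)
    refine h2.congr fun a => ?_
    rw [hftc a 0]; ring

/-- If `f ∈ 𝔚ₙ`, then for each `k = 1, …, n−1` the function
`x ↦ f⁽ᵏ⁾(x)(x−i)ᵏ` belongs to `C₀(ℝ)`. -/
theorem deriv_mul_weight_c0_of_memW (n : ℕ) (f : ℝ → ℂ) (hf : MemW n f) :
    ∀ k : ℕ, 1 ≤ k → k ≤ n - 1 →
      Continuous (fun x : ℝ => iteratedDeriv k f x * ((x : ℂ) - Complex.I) ^ k) ∧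
      Tendsto (fun x : ℝ => iteratedDeriv k f x * ((x : ℂ) - Complex.I) ^ k)
        (cocompact ℝ) (nhds 0) := by
  intro k hk1 hkn
  have hk2 : k + 1 ≤ n := by omega
  have hcd := hf.1
  -- continuity facts
  have hcF : Continuous (iteratedDeriv k f) :=
    hcd.continuous_iteratedDeriv k (by exact_mod_cast Nat.cast_le.2 (by omega))
  have hcF' : Continuous (iteratedDeriv (k+1) f) :=
    hcd.continuous_iteratedDeriv (k+1) (by exact_mod_cast Nat.cast_le.2 hk2)
  have hcw : Continuous (fun x : ℝ => ((x : ℂ) - Complex.I) ^ k) :=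
    (Complex.continuous_ofReal.sub continuous_const).pow k
  have hcont : Continuous (fun x : ℝ => iteratedDeriv k f x * ((x : ℂ) - Complex.I) ^ k) :=
    hcF.mul hcw
  refine ⟨hcont, ?_⟩
  set g : ℝ → ℂ := fun x => iteratedDeriv k f x * ((x : ℂ) - Complex.I) ^ k with hg
  set g' : ℝ → ℂ := fun x => iteratedDeriv (k+1) f x * ((x : ℂ) - Complex.I) ^ k
    + iteratedDeriv k f x * (k * ((x : ℂ) - Complex.I) ^ (k-1)) with hg'
  -- derivative
  have hdiff : Differentiable ℝ (iteratedDeriv k f) :=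
    hcd.differentiable_iteratedDeriv k (by exact_mod_cast Nat.cast_lt.2 (by omega))
  have hderiv : ∀ x : ℝ, HasDerivAt g (g' x) x := by
    intro x
    have hF : HasDerivAt (iteratedDeriv k f) (iteratedDeriv (k+1) f x) x := by
      rw [iteratedDeriv_succ]
      exact (hdiff x).hasDerivAt
    have hw0 : HasDerivAt (fun z : ℂ => (z - Complex.I) ^ k)
        ((k : ℂ) * ((x : ℂ) - Complex.I) ^ (k-1)) (x : ℂ) := by
      have := ((hasDerivAt_id ((x : ℂ))).sub_const Complex.I).pow k
      simpa [Pi.pow_def] using this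
    have hw : HasDerivAt (fun x : ℝ => ((x : ℂ) - Complex.I) ^ k)
        ((k : ℂ) * ((x : ℂ) - Complex.I) ^ (k-1)) x := hw0.comp_ofReal
    exact hF.mul hw
  -- the key bound |x - I| ≤ 1 + |x|
  have habs : ∀ x : ℝ, ‖((x : ℂ) - Complex.I)‖ ≤ 1 + |x| := by
    intro x
    calc ‖((x : ℂ) - Complex.I)‖ ≤ ‖(x : ℂ)‖ + ‖Complex.I‖ := norm_sub_le _ _
      _ = |x| + 1 := by simp
      _ = 1 + |x| := by ring
  have habspow : ∀ (m : ℕ) (x : ℝ), ‖(((x : ℂ) - Complex.I)) ^ m‖ ≤ (1 + |x|) ^ m := by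
    intro m x
    rw [norm_pow]
    exact pow_le_pow_left₀ (norm_nonneg _) (habs x) m
  -- integrability of g'
  have hI1 := hf.2.2.2.1 (k+1) (by omega) hk2
  simp only [Nat.add_sub_cancel] at hI1
  have hI2 := hf.2.2.2.1 k hk1 (by omega)
  have hintg' : Integrable g' := by
    have hmeas : AEStronglyMeasurable g' (volume : Measure ℝ) :=
      ((hcF'.mul hcw).add (hcF.mul (continuous_const.mul
        ((Complex.continuous_ofReal.sub continuous_const).pow (k-1))))).aestronglyMeasurable
    refine (hI1.add (hI2.const_mul (k : ℝ))).mono' hmeas ?_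
    filter_upwards with x
    have b1 : ‖iteratedDeriv (k+1) f x * ((x : ℂ) - Complex.I) ^ k‖
        ≤ (1 + |x|) ^ k * ‖iteratedDeriv (k+1) f x‖ := by
      rw [norm_mul]
      rw [mul_comm]
      exact mul_le_mul_of_nonneg_right (habspow k x) (norm_nonneg _)
    have b2 : ‖iteratedDeriv k f x * ((k : ℂ) * ((x : ℂ) - Complex.I) ^ (k-1))‖
        ≤ (k : ℝ) * ((1 + |x|) ^ (k-1) * ‖iteratedDeriv k f x‖) := by
      rw [norm_mul, norm_mul]
      have : ‖(k : ℂ)‖ = (k : ℝ) := by simp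
      rw [this]
      calc ‖iteratedDeriv k f x‖ * ((k:ℝ) * ‖((x : ℂ) - Complex.I) ^ (k-1)‖)
          ≤ ‖iteratedDeriv k f x‖ * ((k:ℝ) * (1 + |x|) ^ (k-1)) := by
            apply mul_le_mul_of_nonneg_left _ (norm_nonneg _)
            exact mul_le_mul_of_nonneg_left (habspow (k-1) x) (Nat.cast_nonneg k)
        _ = (k : ℝ) * ((1 + |x|) ^ (k-1) * ‖iteratedDeriv k f x‖) := by ring
    calc ‖g' x‖ ≤ ‖iteratedDeriv (k+1) f x * ((x : ℂ) - Complex.I) ^ k‖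
          + ‖iteratedDeriv k f x * ((k : ℂ) * ((x : ℂ) - Complex.I) ^ (k-1))‖ := norm_add_le _ _
      _ ≤ (1 + |x|) ^ k * ‖iteratedDeriv (k+1) f x‖
          + (k : ℝ) * ((1 + |x|) ^ (k-1) * ‖iteratedDeriv k f x‖) := add_le_add b1 b2
  -- limits exist
  obtain ⟨⟨Lt, hLt⟩, ⟨Lb, hLb⟩⟩ := aux_limit_exists g g' hderiv hintg'
  -- bound for aux_limit_zero
  have hbound : ∀ x : ℝ, ‖g x‖ ≤ (1 + |x|) * ((1 + |x|) ^ (k-1) * ‖iteratedDeriv k f x‖) := by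
    intro x
    have h1 : (1:ℝ) + |x| > 0 := by positivity
    have : (1 + |x|) * ((1 + |x|) ^ (k-1) * ‖iteratedDeriv k f x‖)
        = (1 + |x|) ^ k * ‖iteratedDeriv k f x‖ := by
      rw [← mul_assoc, ← pow_succ']
      congr 2
      omega
    rw [this, hg, norm_mul, mul_comm]
    exact mul_le_mul_of_nonneg_right (habspow k x) (norm_nonneg _)
  have hLt0 : Lt = 0 := aux_limit_zero g _ hI2 hbound hLt
  have hLb0 : Lb = 0 := by
    have hIneg : Integrable (fun x : ℝ => (1 + |x|) ^ (k-1) * ‖iteratedDeriv k f (-x)‖)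
        (volume : Measure ℝ) := by
      have := hI2.comp_neg
      simpa [abs_neg] using this
    refine aux_limit_zero (fun x => g (-x)) _ hIneg (fun x => ?_)
      (hLb.comp tendsto_neg_atTop_atBot)
    have := hbound (-x)
    simpa [abs_neg] using this
  rw [cocompact_eq_atBot_atTop]
  rw [tendsto_sup]
  exact ⟨hLb0 ▸ hLb, hLt0 ▸ hLt⟩
end

section
/- Let n ≥ 1, f ∈ Cⁿ(ℝ), u(λ) = λ − i, and j ∈ {0,…,n}. Then for all λ₀,…,λₙ ∈ ℝ: f^{[n]}(λ₀,…,λₙ) = (fu)^{[n]}(λ₀,…,λₙ)·(λⱼ − i)^{−1} − f^{[n−1]}(λ₀,…,λ_{j−1},λ_{j+1},…,λₙ)·(λⱼ − i)^{−1}. -/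
open Complex

/-- The `n`-th order divided difference of `f` at the points `l 0, …, l n`,
defined recursively; at pairwise distinct points this agrees with the usual
(continuously extended) divided difference. -/
noncomputable def divDiff (f : ℝ → ℂ) : ℕ → (ℕ → ℝ) → ℂ
  | 0, l => f (l 0)
  | (n + 1), l =>
      (divDiff f n (Function.update l n (l (n + 1))) - divDiff f n l) /
        ((l (n + 1) : ℂ) - (l n : ℂ))

/-- The tuple `l` with its `j`-th entry removed. -/
def removeIdx (l : ℕ → ℝ) (j : ℕ) : ℕ → ℝ := fun m => if m < j then l m else l (m + 1)

lemma divDiff_zero (f : ℝ → ℂ) (l : ℕ → ℝ) : divDiff f 0 l = f (l 0) := rfl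

lemma divDiff_succ (f : ℝ → ℂ) (n : ℕ) (l : ℕ → ℝ) :
    divDiff f (n + 1) l =
      (divDiff f n (Function.update l n (l (n + 1))) - divDiff f n l) /
        ((l (n + 1) : ℂ) - (l n : ℂ)) := rfl

lemma divDiff_congr (f : ℝ → ℂ) :
    ∀ (n : ℕ) (l l' : ℕ → ℝ), (∀ m, m ≤ n → l m = l' m) → divDiff f n l = divDiff f n l'
  | 0, l, l', h => by rw [divDiff_zero, divDiff_zero, h 0 le_rfl]
  | (n + 1), l, l', h => by
      rw [divDiff_succ, divDiff_succ,
        divDiff_congr f n (Function.update l n (l (n + 1)))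
          (Function.update l' n (l' (n + 1))) ?_,
        divDiff_congr f n l l' (fun m hm => h m (hm.trans (Nat.le_succ n))),
        h (n + 1) le_rfl, h n (Nat.le_succ n)]
      intro m hm
      rcases eq_or_ne m n with rfl | hne
      · simp [h (m + 1) le_rfl]
      · simp [Function.update_apply, hne, h m (hm.trans (Nat.le_succ n))]

lemma divDiff_succ' (f : ℝ → ℂ) {n : ℕ} {l : ℕ → ℝ} :
    divDiff f (n + 2) l =
      (divDiff f (n + 1) (Function.update l (n + 1) (l (n + 2))) - divDiff f (n + 1) l) /
        ((l (n + 2) : ℂ) - (l (n + 1) : ℂ)) := rfl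

lemma divDiff_key (f : ℝ → ℂ) (n : ℕ) :
    ∀ (l : ℕ → ℝ), (∀ i i' : ℕ, i ≤ n + 1 → i' ≤ n + 1 → i ≠ i' → l i ≠ l i') →
    ∀ j, j ≤ n + 1 →
    divDiff (fun x : ℝ => f x * ((x : ℂ) - Complex.I)) (n + 1) l
      = divDiff f (n + 1) l * ((l j : ℂ) - Complex.I) + divDiff f n (removeIdx l j) := by
  induction n with
  | zero =>
      intro l h j hj
      have hne : l 1 ≠ l 0 := h 1 0 le_rfl (by norm_num) (by norm_num)
      have hc : ((l 1 : ℂ) - (l 0 : ℂ)) ≠ 0 := by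
        rw [sub_ne_zero]; exact_mod_cast hne
      interval_cases j
      · simp only [divDiff_succ, divDiff_zero, removeIdx]
        simp only [Function.update_self, Function.update_apply]
        norm_num
        field_simp
        ring
      · simp only [divDiff_succ, divDiff_zero, removeIdx]
        simp only [Function.update_self, Function.update_apply]
        norm_num
        field_simp
        ring
  | succ n ih =>
      intro l h j hj
      show divDiff (fun x : ℝ => f x * ((x : ℂ) - Complex.I)) (n + 2) l
        = divDiff f (n + 2) l * ((l j : ℂ) - Complex.I) + divDiff f (n + 1) (removeIdx l j)
      set l' : ℕ → ℝ := Function.update l (n + 1) (l (n + 2)) with hl'def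
      have hl'le : ∀ m, m ≤ n → l' m = l m := fun m hm =>
        Function.update_of_ne (by omega) _ _
      have hl'top : l' (n + 1) = l (n + 2) := Function.update_self _ _ _
      have hl' : ∀ i i' : ℕ, i ≤ n + 1 → i' ≤ n + 1 → i ≠ i' → l' i ≠ l' i' := by
        intro i i' hi hi' hne
        rcases eq_or_ne i (n + 1) with rfl | hi1 <;> rcases eq_or_ne i' (n + 1) with rfl | hi2
        · omega
        · rw [hl'top, hl'le i' (by omega)]; exact h (n + 2) i' le_rfl (by omega) (by omega)
        · rw [hl'top, hl'le i (by omega)]; exact h i (n + 2) (by omega) le_rfl (by omega)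
        · rw [hl'le i (by omega), hl'le i' (by omega)]; exact h i i' (by omega) (by omega) hne
      have hrestrict : ∀ i i' : ℕ, i ≤ n + 1 → i' ≤ n + 1 → i ≠ i' → l i ≠ l i' :=
        fun i i' hi hi' hne => h i i' (by omega) (by omega) hne
      have hc : ((l (n + 2) : ℂ) - (l (n + 1) : ℂ)) ≠ 0 := by
        rw [sub_ne_zero]
        exact_mod_cast h (n + 2) (n + 1) le_rfl (by omega) (by omega)
      rcases Nat.lt_or_ge j (n + 1) with hjn | hjn
      · -- j ≤ n
        have e1 := ih l' hl' j (by omega)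
        have e2 := ih l hrestrict j (by omega)
        rw [hl'le j (by omega)] at e1
        -- remainder bookkeeping
        set r : ℕ → ℝ := removeIdx l j with hrdef
        have hr1 : r (n + 1) = l (n + 2) := by simp [hrdef, removeIdx, Nat.not_lt.mpr (by omega : j ≤ n + 1)]
        have hr0 : r n = l (n + 1) := by simp [hrdef, removeIdx, Nat.not_lt.mpr (by omega : j ≤ n)]
        have e3 : divDiff f n (removeIdx l' j) = divDiff f n (Function.update r n (r (n + 1))) := by
          apply divDiff_congr
          intro m hm
          rcases eq_or_ne m n with rfl | hmn
          · rw [Function.update_self, hr1]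
            simp [removeIdx, Nat.not_lt.mpr (by omega : j ≤ m), hl'def,
              Function.update_apply]
          · rw [Function.update_of_ne hmn]
            rcases Nat.lt_or_ge m j with hmj | hmj
            · simp [removeIdx, hmj, hrdef, hl'def, Function.update_apply]
              omega
            · simp [removeIdx, Nat.not_lt.mpr hmj, hrdef, hl'def, Function.update_apply]
              omega
        have expand : divDiff f (n + 1) r =
            (divDiff f n (removeIdx l' j) - divDiff f n r) /
              ((l (n + 2) : ℂ) - (l (n + 1) : ℂ)) := by
          rw [divDiff_succ f n r, e3, hr1, hr0]
        rw [divDiff_succ', divDiff_succ', e1, e2, expand]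
        ring
      · -- j = n + 1 or j = n + 2
        have e1 := ih l' hl' (n + 1) le_rfl
        have e2 := ih l hrestrict (n + 1) le_rfl
        rw [hl'top] at e1
        have eB : removeIdx l' (n + 1) = removeIdx l (n + 1) := by
          funext m
          rcases Nat.lt_or_ge m (n + 1) with hm | hm
          · simp [removeIdx, hm, hl'def, Function.update_apply]; omega
          · simp [removeIdx, Nat.not_lt.mpr hm, hl'def, Function.update_apply]; omega
        rw [eB] at e1
        rcases (by omega : j = n + 1 ∨ j = n + 2) with rfl | rfl
        · -- j = n + 1
          have eA : divDiff f (n + 1) l' = divDiff f (n + 1) (removeIdx l (n + 1)) := by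
            apply divDiff_congr
            intro m hm
            rcases eq_or_ne m (n + 1) with rfl | hmn
            · rw [hl'top]; simp [removeIdx]
            · rw [hl'le m (by omega)]; simp [removeIdx, (by omega : m < n + 1)]
          rw [divDiff_succ', divDiff_succ', e1, e2, ← eA]
          field_simp
          ring
        · -- j = n + 2
          have eA : divDiff f (n + 1) l = divDiff f (n + 1) (removeIdx l (n + 2)) := by
            apply divDiff_congr
            intro m hm
            simp [removeIdx, (by omega : m < n + 2)]
          rw [divDiff_succ', divDiff_succ', e1, e2, ← eA]
          field_simp
          ring

/-- For `u(λ) = λ − i` and any `j ∈ {0,…,n}`: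
`f^{[n]}(λ₀,…,λₙ) = (fu)^{[n]}(λ₀,…,λₙ)·(λⱼ−i)⁻¹ −
f^{[n−1]}(λ₀,…,λ_{j−1},λ_{j+1},…,λₙ)·(λⱼ−i)⁻¹`, for pairwise distinct points. -/
theorem divDiff_remove_weight (n : ℕ) (hn : 1 ≤ n) (f : ℝ → ℂ) (hf : ContDiff ℝ n f)
    (j : ℕ) (hj : j ≤ n)
    (l : ℕ → ℝ) (hl : ∀ i i' : ℕ, i ≤ n → i' ≤ n → i ≠ i' → l i ≠ l i') :
    divDiff f n l
      = divDiff (fun x : ℝ => f x * ((x : ℂ) - Complex.I)) n l * ((l j : ℂ) - Complex.I)⁻¹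
        - divDiff f (n - 1) (removeIdx l j) * ((l j : ℂ) - Complex.I)⁻¹ := by
  obtain ⟨m, rfl⟩ : ∃ m, n = m + 1 := ⟨n - 1, (Nat.succ_pred_eq_of_pos hn).symm⟩
  have key := divDiff_key f m l hl j hj
  have hu : ((l j : ℂ) - Complex.I) ≠ 0 := by
    intro hzero
    have := congrArg Complex.im hzero
    simp at this
  rw [Nat.add_sub_cancel, key]
  field_simp
  ring
end

section
/- Let n ∈ ℕ and f ∈ Cⁿ(ℝ) with the Fourier transform of f^{(n)} integrable. Then the n-th divided difference admits the representation f^{[n]}(λ₀,…,λₙ) = ∫_{Δₙ} ∫_ℝ e^{i t s₀ λ₀} ⋯ e^{i t sₙ λₙ} \widehat{f^{(n)}}(t) dt dσ(s), where Δₙ = {s ∈ ℝ_{≥0}^{n+1} : s₀ + … + sₙ = 1} is the n-simplex with Lebesgue surface measure σ. -/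
open MeasureTheory Complex

/-- parametrized simplex -/
def Smplx (n : ℕ) : Set (Fin n → ℝ) := {s | (∀ i, 0 ≤ s i) ∧ (∑ i, s i) ≤ 1}

/-- the point `(1-∑ s) l₀ + ∑ sᵢ l_{i+1}` -/
def nodal (n : ℕ) (l : ℕ → ℝ) (s : Fin n → ℝ) : ℝ :=
  (1 - ∑ i, s i) * l 0 + ∑ i : Fin n, s i * l (i.1 + 1)

lemma measurableSet_Smplx (n : ℕ) : MeasurableSet (Smplx n) := by
  have h1 : MeasurableSet {s : Fin n → ℝ | ∀ i, 0 ≤ s i} := by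
    rw [Set.setOf_forall]
    exact MeasurableSet.iInter fun i => measurableSet_le measurable_const (measurable_pi_apply i)
  have h2 : MeasurableSet {s : Fin n → ℝ | (∑ i, s i) ≤ 1} :=
    measurableSet_le (by fun_prop) measurable_const
  exact h1.inter h2

lemma isCompact_Smplx (n : ℕ) : IsCompact (Smplx n) := by
  have hsub : Smplx n ⊆ Set.Icc (0 : Fin n → ℝ) 1 := by
    rintro s ⟨h1, h2⟩
    refine ⟨fun i => h1 i, fun i => ?_⟩
    calc s i ≤ ∑ j, s j := Finset.single_le_sum (fun j _ => h1 j) (Finset.mem_univ i)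
    _ ≤ 1 := h2
  have hcl : IsClosed (Smplx n) := by
    have h1 : IsClosed {s : Fin n → ℝ | ∀ i, 0 ≤ s i} := by
      rw [Set.setOf_forall]
      exact isClosed_iInter fun i => isClosed_le continuous_const (continuous_apply i)
    have h2 : IsClosed {s : Fin n → ℝ | (∑ i, s i) ≤ 1} :=
      isClosed_le (by fun_prop) continuous_const
    exact h1.inter h2
  exact isCompact_Icc.of_isClosed_subset hcl hsub

lemma continuous_nodal (n : ℕ) (l : ℕ → ℝ) : Continuous (nodal n l) := by
  unfold nodal; fun_prop

lemma integrableOn_nodal (n : ℕ) (l : ℕ → ℝ) {h : ℝ → ℂ} (hh : Continuous h) :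
    IntegrableOn (fun s => h (nodal n l s)) (Smplx n) := by
  exact (hh.comp (continuous_nodal n l)).continuousOn.integrableOn_compact (isCompact_Smplx n)

lemma nodal_congr {n : ℕ} {l l' : ℕ → ℝ} (h : ∀ m, m ≤ n → l m = l' m) :
    nodal n l = nodal n l' := by
  funext s
  unfold nodal
  rw [h 0 (Nat.zero_le _)]
  congr 1
  exact Finset.sum_congr rfl fun i _ => by rw [h (i.1 + 1) (by omega)]

lemma sum_update (n : ℕ) (j : Fin n) (s : Fin n → ℝ) (v : ℝ) :
    ∑ i, Function.update s j v i = v + (∑ i, s i) - s j := by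
  rw [Finset.sum_update_of_mem (Finset.mem_univ j),
    Finset.sum_sdiff_eq_sub (Finset.singleton_subset_iff.2 (Finset.mem_univ j))]
  simp; ring

/-- The linear part of the simplex reflection. -/
noncomputable def swapLin (n : ℕ) (j : Fin n) : (Fin n → ℝ) →ₗ[ℝ] (Fin n → ℝ) where
  toFun v := Function.update v j (-(∑ i, v i))
  map_add' v w := by
    funext i
    rcases eq_or_ne i j with h | h
    · simp [Function.update_apply, h, Finset.sum_add_distrib]; ring
    · simp [Function.update_apply, h]
  map_smul' c v := by
    funext i
    rcases eq_or_ne i j with h | h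
    · simp [Function.update_apply, h, Finset.mul_sum]
    · simp [Function.update_apply, h]

lemma swapLin_apply (n : ℕ) (j : Fin n) (v : Fin n → ℝ) :
    swapLin n j v = Function.update v j (-(∑ i, v i)) := rfl

lemma swapLin_invol (n : ℕ) (j : Fin n) (v : Fin n → ℝ) :
    swapLin n j (swapLin n j v) = v := by
  rw [swapLin_apply, swapLin_apply, sum_update, Function.update_idem]
  simp

lemma abs_det_swapLin (n : ℕ) (j : Fin n) :
    |LinearMap.det (swapLin n j)| = 1 := by
  have h : (swapLin n j).comp (swapLin n j) = LinearMap.id :=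
    LinearMap.ext fun v => swapLin_invol n j v
  have hd : LinearMap.det (swapLin n j) * LinearMap.det (swapLin n j) = 1 := by
    rw [← LinearMap.det_comp, h, LinearMap.det_id]
  rcases mul_self_eq_one_iff.1 hd with h1 | h1 <;> rw [h1] <;> norm_num

/-- swap the values of `l` at `0` and `k`. -/
def swapl (l : ℕ → ℝ) (k : ℕ) : ℕ → ℝ :=
  fun m => if m = 0 then l k else if m = k then l 0 else l m

section swapT
variable (n : ℕ) (j : Fin n)

/-- The simplex reflection exchanging the weight of the base point with weight `j`. -/
noncomputable def swapT : (Fin n → ℝ) → (Fin n → ℝ) :=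
  fun s => Function.update s j (1 - ∑ i, s i)

lemma sum_swapT (s : Fin n → ℝ) : ∑ i, swapT n j s i = 1 - s j := by
  rw [swapT, sum_update]; ring

lemma swapT_invol (s : Fin n → ℝ) : swapT n j (swapT n j s) = s := by
  unfold swapT
  rw [sum_update, Function.update_idem]
  have h : 1 - (1 - ∑ i, s i + ∑ i, s i - s j) = s j := by ring
  rw [h, Function.update_eq_self]

lemma swapT_mem {s : Fin n → ℝ} (hs : s ∈ Smplx n) : swapT n j s ∈ Smplx n := by
  obtain ⟨h1, h2⟩ := hs
  constructor
  · intro i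
    rcases eq_or_ne i j with h | h
    · subst h; rw [swapT, Function.update_self]; linarith
    · rw [swapT, Function.update_of_ne h]; exact h1 i
  · rw [sum_swapT]
    have := h1 j; linarith

lemma swapT_image : swapT n j '' Smplx n = Smplx n := by
  apply Set.Subset.antisymm
  · rintro x ⟨s, hs, rfl⟩; exact swapT_mem n j hs
  · intro s hs
    exact ⟨swapT n j s, swapT_mem n j hs, swapT_invol n j s⟩

lemma hasFDerivAt_swapT (s : Fin n → ℝ) :
    HasFDerivAt (swapT n j) ((swapLin n j).toContinuousLinearMap) s := by
  have heq : swapT n j = fun s => (swapLin n j).toContinuousLinearMap s + Pi.single j 1 := by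
    funext s
    funext i
    rcases eq_or_ne i j with h | h
    · subst h
      simp [swapT, swapLin_apply, Function.update_apply, Pi.single_apply]
      ring
    · simp [swapT, swapLin_apply, Function.update_apply, h, Pi.single_apply]
  rw [heq]
  exact ((swapLin n j).toContinuousLinearMap.hasFDerivAt).add_const _

end swapT

lemma swapIntegral (n k : ℕ) (hk1 : 1 ≤ k) (hkn : k ≤ n) {h : ℝ → ℂ}
    (hh : Continuous h) (l : ℕ → ℝ) :
    ∫ s in Smplx n, h (nodal n (swapl l k) s) = ∫ s in Smplx n, h (nodal n l s) := by
  set j : Fin n := ⟨k - 1, by omega⟩ with hj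
  have hjk : (j : ℕ) + 1 = k := by simp [hj]; omega
  have key : ∀ s, nodal n (swapl l k) s = nodal n l (swapT n j s) := by
    intro s
    rw [nodal, nodal, sum_swapT]
    have hsum : ∀ (m : ℕ → ℝ), ∑ i, swapT n j s i * m (i.1 + 1)
        = (1 - ∑ i, s i) * m ((j : ℕ) + 1)
          + ∑ i ∈ Finset.univ.erase j, s i * m (i.1 + 1) := by
      intro m
      rw [← Finset.add_sum_erase _ _ (Finset.mem_univ j)]
      congr 1
      · rw [swapT, Function.update_self]
      · exact Finset.sum_congr rfl fun i hi => by
          rw [swapT, Function.update_of_ne (Finset.ne_of_mem_erase hi)]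
    rw [hsum]
    have hsum2 : ∑ i, s i * swapl l k (i.1 + 1)
        = s j * l 0 + ∑ i ∈ Finset.univ.erase j, s i * l (i.1 + 1) := by
      rw [← Finset.add_sum_erase _ _ (Finset.mem_univ j)]
      congr 1
      · rw [swapl]
        rw [if_neg (by omega : ¬ (j : ℕ) + 1 = 0), if_pos hjk]
      · refine Finset.sum_congr rfl fun i hi => ?_
        have hik : (i : ℕ) + 1 ≠ k := by
          intro hc
          exact Finset.ne_of_mem_erase hi (Fin.ext (by omega))
        rw [swapl]
        simp only [if_neg (Nat.succ_ne_zero _), if_neg hik]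
    rw [hsum2, hjk]
    have : swapl l k 0 = l k := by rw [swapl]; simp
    rw [this]
    ring
  have hder : ∀ x ∈ Smplx n, HasFDerivWithinAt (swapT n j)
      ((swapLin n j).toContinuousLinearMap) (Smplx n) x :=
    fun x _ => (hasFDerivAt_swapT n j x).hasFDerivWithinAt
  have hinj : Set.InjOn (swapT n j) (Smplx n) :=
    (Function.Involutive.injective (swapT_invol n j)).injOn
  have hdet : |((swapLin n j).toContinuousLinearMap : (Fin n → ℝ) →L[ℝ] (Fin n → ℝ)).det| = 1 := by
    rw [ContinuousLinearMap.det]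
    simpa using abs_det_swapLin n j
  calc ∫ s in Smplx n, h (nodal n (swapl l k) s)
      = ∫ s in Smplx n,
          |((swapLin n j).toContinuousLinearMap).det| • h (nodal n l (swapT n j s)) := by
        refine setIntegral_congr_fun (measurableSet_Smplx n) fun s _ => ?_
        rw [key s, hdet, one_smul]
    _ = ∫ s in swapT n j '' Smplx n, h (nodal n l s) :=
        (integral_image_eq_integral_abs_det_fderiv_smul volume (measurableSet_Smplx n)
          hder hinj (fun x => h (nodal n l x))).symm
    _ = ∫ s in Smplx n, h (nodal n l s) := by rw [swapT_image]

lemma snoc_mem_Smplx_iff (n : ℕ) (s' : Fin n → ℝ) (t : ℝ) :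
    Fin.snoc s' t ∈ Smplx (n + 1) ↔ s' ∈ Smplx n ∧ t ∈ Set.Icc 0 (1 - ∑ i, s' i) := by
  have hsum : ∑ i : Fin (n+1), (Fin.snoc s' t : Fin (n+1) → ℝ) i = (∑ i, s' i) + t := by
    rw [Fin.sum_univ_castSucc]; simp
  have hpos : (∀ i : Fin (n+1), 0 ≤ (Fin.snoc s' t : Fin (n+1) → ℝ) i)
      ↔ ((∀ i, 0 ≤ s' i) ∧ 0 ≤ t) := by
    constructor
    · intro h
      exact ⟨fun i => by simpa using h i.castSucc, by simpa using h (Fin.last n)⟩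
    · rintro ⟨h1, h2⟩ i
      induction i using Fin.lastCases with
      | last => simpa using h2
      | cast i => simpa using h1 i
  constructor
  · rintro ⟨h1, h2⟩
    rw [hsum] at h2
    obtain ⟨h1', ht⟩ := hpos.1 h1
    exact ⟨⟨h1', by linarith⟩, ⟨ht, by linarith⟩⟩
  · rintro ⟨⟨h1, h2⟩, ⟨ht0, ht1⟩⟩
    exact ⟨hpos.2 ⟨h1, ht0⟩, by rw [hsum]; linarith⟩

lemma simplexSlice (n : ℕ) (H : (Fin (n + 1) → ℝ) → ℂ) (hH : Continuous H) :
    ∫ s in Smplx (n + 1), H s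
      = ∫ s' in Smplx n, ∫ t in Set.Icc (0:ℝ) (1 - ∑ i, s' i), H (Fin.snoc s' t) := by
  have hInd : Integrable ((Smplx (n + 1)).indicator H) := by
    rw [integrable_indicator_iff (measurableSet_Smplx _)]
    exact hH.continuousOn.integrableOn_compact (isCompact_Smplx _)
  set e := MeasurableEquiv.piFinSuccAbove (fun _ : Fin (n + 1) => ℝ) (Fin.last n) with he
  have hmp : MeasurePreserving e.symm :=
    (volume_preserving_piFinSuccAbove (fun _ : Fin (n + 1) => ℝ) (Fin.last n)).symm e
  have hsymm : ∀ (t : ℝ) (s' : Fin n → ℝ), e.symm (t, s') = Fin.snoc s' t := by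
    intro t s'
    simp [he, MeasurableEquiv.piFinSuccAbove, Fin.insertNth_last', Fin.snocEquiv]
  have hint2 : Integrable (fun p : ℝ × (Fin n → ℝ) => (Smplx (n + 1)).indicator H (e.symm p)) :=
    (hmp.integrable_comp_emb e.symm.measurableEmbedding).2 hInd
  have hfact : ∀ (s' : Fin n → ℝ) (t : ℝ),
      (Smplx (n + 1)).indicator H (Fin.snoc s' t)
        = (Smplx n).indicator
            (fun s' => (Set.Icc (0:ℝ) (1 - ∑ i, s' i)).indicator
              (fun t => H (Fin.snoc s' t)) t) s' := by
    intro s' t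
    by_cases hmem : Fin.snoc s' t ∈ Smplx (n + 1)
    · obtain ⟨h1, h2⟩ := (snoc_mem_Smplx_iff n s' t).1 hmem
      rw [Set.indicator_of_mem hmem, Set.indicator_of_mem h1, Set.indicator_of_mem h2]
    · rw [Set.indicator_of_notMem hmem]
      by_cases h1 : s' ∈ Smplx n
      · rw [Set.indicator_of_mem h1]
        have h2 : t ∉ Set.Icc (0:ℝ) (1 - ∑ i, s' i) := fun h2 =>
          hmem ((snoc_mem_Smplx_iff n s' t).2 ⟨h1, h2⟩)
        rw [Set.indicator_of_notMem h2]
      · rw [Set.indicator_of_notMem h1]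
  calc ∫ s in Smplx (n + 1), H s
      = ∫ s, (Smplx (n + 1)).indicator H s := (integral_indicator (measurableSet_Smplx _)).symm
    _ = ∫ p : ℝ × (Fin n → ℝ), (Smplx (n + 1)).indicator H (e.symm p) :=
        (hmp.integral_comp e.symm.measurableEmbedding _).symm
    _ = ∫ s' : Fin n → ℝ, ∫ t : ℝ, (Smplx (n + 1)).indicator H (e.symm (t, s')) := by
        rw [show (volume : Measure (ℝ × (Fin n → ℝ))) = volume.prod volume from rfl] at hint2 ⊢
        exact integral_prod_symm _ hint2
    _ = ∫ s' : Fin n → ℝ, (Smplx n).indicator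
          (fun s' => ∫ t in Set.Icc (0:ℝ) (1 - ∑ i, s' i), H (Fin.snoc s' t)) s' := by
        refine integral_congr_ae (Filter.Eventually.of_forall fun s' => ?_)
        dsimp only
        rw [show (∫ t : ℝ, (Smplx (n + 1)).indicator H (e.symm (t, s')))
            = ∫ t : ℝ, (Smplx n).indicator
                (fun s' => (Set.Icc (0:ℝ) (1 - ∑ i, s' i)).indicator
                  (fun t => H (Fin.snoc s' t)) t) s' from
          integral_congr_ae (Filter.Eventually.of_forall fun t => by
            dsimp only
            rw [hsymm t s', hfact s' t])]
        by_cases h1 : s' ∈ Smplx n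
        · rw [Set.indicator_of_mem h1]
          simp only [Set.indicator_of_mem h1]
          exact integral_indicator measurableSet_Icc
        · rw [Set.indicator_of_notMem h1]
          simp only [Set.indicator_of_notMem h1]
          exact integral_zero _ _
    _ = ∫ s' in Smplx n, ∫ t in Set.Icc (0:ℝ) (1 - ∑ i, s' i), H (Fin.snoc s' t) :=
        integral_indicator (measurableSet_Smplx _)

lemma ftc_step (f : ℝ → ℂ) (n : ℕ) (hf : ContDiff ℝ (n + 1) f) (c a b : ℝ)
    (ha : a ≠ 0) (hb : 0 ≤ b) :
    ∫ t in Set.Icc (0:ℝ) b, iteratedDeriv (n + 1) f (c + t * a)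
      = (iteratedDeriv n f (c + b * a) - iteratedDeriv n f c) / (a : ℂ) := by
  have hcont : Continuous (iteratedDeriv (n + 1) f) :=
    hf.continuous_iteratedDeriv (n + 1) (by exact_mod_cast le_rfl)
  have hderiv : ∀ x : ℝ, HasDerivAt (iteratedDeriv n f) (iteratedDeriv (n + 1) f x) x := by
    intro x
    rw [iteratedDeriv_succ]
    exact ((hf.differentiable_iteratedDeriv n (by exact_mod_cast Nat.lt_succ_self n)) x).hasDerivAt
  have hg : ∀ t : ℝ, HasDerivAt (fun u => iteratedDeriv n f (c + u * a) / (a : ℂ))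
      (iteratedDeriv (n + 1) f (c + t * a)) t := by
    intro t
    have h1 : HasDerivAt (fun u : ℝ => c + u * a) a t := by
      simpa using ((hasDerivAt_id t).mul_const a).const_add c
    have h2 := (hderiv (c + t * a)).scomp t h1
    have h3 := h2.div_const (a : ℂ)
    have h4 : (a • iteratedDeriv (n + 1) f (c + t * a)) / (a : ℂ)
        = iteratedDeriv (n + 1) f (c + t * a) := by
      rw [real_smul, mul_div_cancel_left₀ _ (Complex.ofReal_ne_zero.2 ha)]
    rw [← h4]
    exact h3
  rw [integral_Icc_eq_integral_Ioc, ← intervalIntegral.integral_of_le hb,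
    intervalIntegral.integral_eq_sub_of_hasDerivAt (fun t _ => hg t)
      ((hcont.comp (by fun_prop)).intervalIntegrable 0 b)]
  rw [zero_mul, add_zero, div_sub_div_same]

lemma nodal_snoc (n : ℕ) (l : ℕ → ℝ) (s' : Fin n → ℝ) (t : ℝ) :
    nodal (n + 1) l (Fin.snoc s' t) = nodal n l s' + t * (l (n + 1) - l 0) := by
  unfold nodal
  rw [show ∑ i : Fin (n+1), (Fin.snoc s' t : Fin (n+1) → ℝ) i = (∑ i, s' i) + t from by
    rw [Fin.sum_univ_castSucc]; simp]
  rw [Fin.sum_univ_castSucc]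
  simp only [Fin.snoc_castSucc, Fin.snoc_last, Fin.coe_castSucc, Fin.val_last]
  ring

lemma nodal_top (n : ℕ) (l : ℕ → ℝ) (s' : Fin n → ℝ) :
    nodal n l s' + (1 - ∑ i, s' i) * (l (n + 1) - l 0)
      = nodal n (Function.update l 0 (l (n + 1))) s' := by
  unfold nodal
  rw [Function.update_self]
  have h : ∀ i : Fin n, Function.update l 0 (l (n + 1)) (i.1 + 1) = l (i.1 + 1) :=
    fun i => Function.update_of_ne (by omega) _ _
  simp only [h]
  ring

lemma star_step (n : ℕ) (f : ℝ → ℂ) (hf : ContDiff ℝ (n + 1) f) (l : ℕ → ℝ)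
    (h0 : l (n + 1) ≠ l 0) :
    ∫ s in Smplx (n + 1), iteratedDeriv (n + 1) f (nodal (n + 1) l s)
      = ((∫ s in Smplx n, iteratedDeriv n f (nodal n (Function.update l 0 (l (n + 1))) s))
          - ∫ s in Smplx n, iteratedDeriv n f (nodal n l s))
        / ((l (n + 1) : ℂ) - (l 0 : ℂ)) := by
  have hcont1 : Continuous (iteratedDeriv (n + 1) f) :=
    hf.continuous_iteratedDeriv (n + 1) (by exact_mod_cast le_rfl)
  have hcont0 : Continuous (iteratedDeriv n f) :=
    hf.continuous_iteratedDeriv n (by exact_mod_cast Nat.le_succ n)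
  rw [show (∫ s in Smplx (n + 1), iteratedDeriv (n + 1) f (nodal (n + 1) l s))
      = ∫ s' in Smplx n, ∫ t in Set.Icc (0:ℝ) (1 - ∑ i, s' i),
          iteratedDeriv (n + 1) f (nodal (n + 1) l (Fin.snoc s' t)) from
    simplexSlice n _ (hcont1.comp (continuous_nodal _ l))]
  have key : ∀ s' ∈ Smplx n,
      (∫ t in Set.Icc (0:ℝ) (1 - ∑ i, s' i), iteratedDeriv (n + 1) f (nodal (n + 1) l (Fin.snoc s' t)))
        = (iteratedDeriv n f (nodal n (Function.update l 0 (l (n + 1))) s')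
            - iteratedDeriv n f (nodal n l s')) / ((l (n + 1) : ℂ) - (l 0 : ℂ)) := by
    intro s' hs'
    have hb : (0:ℝ) ≤ 1 - ∑ i, s' i := by have := hs'.2; linarith
    calc (∫ t in Set.Icc (0:ℝ) (1 - ∑ i, s' i),
            iteratedDeriv (n + 1) f (nodal (n + 1) l (Fin.snoc s' t)))
        = ∫ t in Set.Icc (0:ℝ) (1 - ∑ i, s' i),
            iteratedDeriv (n + 1) f (nodal n l s' + t * (l (n + 1) - l 0)) := by
          refine setIntegral_congr_fun measurableSet_Icc fun t _ => ?_
          rw [nodal_snoc]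
      _ = (iteratedDeriv n f (nodal n l s' + (1 - ∑ i, s' i) * (l (n + 1) - l 0))
            - iteratedDeriv n f (nodal n l s')) / ((l (n + 1) - l 0 : ℝ) : ℂ) :=
          ftc_step f n hf _ _ _ (sub_ne_zero.2 h0) hb
      _ = (iteratedDeriv n f (nodal n (Function.update l 0 (l (n + 1))) s')
            - iteratedDeriv n f (nodal n l s')) / ((l (n + 1) : ℂ) - (l 0 : ℂ)) := by
          rw [nodal_top]
          push_cast
          ring_nf
  rw [setIntegral_congr_fun (measurableSet_Smplx n) key, integral_div,
    integral_sub (integrableOn_nodal n _ hcont0) (integrableOn_nodal n _ hcont0)]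

theorem hermite_genocchi (n : ℕ) : ∀ (f : ℝ → ℂ), ContDiff ℝ n f → ∀ l : ℕ → ℝ,
    (∀ i j : ℕ, i ≤ n → j ≤ n → i ≠ j → l i ≠ l j) →
    divDiff f n l = ∫ s in Smplx n, iteratedDeriv n f (nodal n l s) := by
  induction n with
  | zero =>
    intro f hf l hl
    have hS : Smplx 0 = Set.univ := by
      ext s
      simp [Smplx]
    have hnodal : ∀ s, nodal 0 l s = l 0 := by
      intro s; simp [nodal]
    rw [divDiff, hS]
    rw [setIntegral_univ]
    rw [show (fun s : Fin 0 → ℝ => iteratedDeriv 0 f (nodal 0 l s)) = fun _ => f (l 0) from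
      funext fun s => by rw [hnodal s, iteratedDeriv_zero]]
    rw [integral_const]
    have hvol : (volume : Measure (Fin 0 → ℝ)) Set.univ = 1 := by
      rw [MeasureTheory.volume_pi, Measure.pi_univ]
      simp
    rw [measureReal_def, hvol]
    simp
  | succ n IH =>
    intro f hf l hl
    have hfn : ContDiff ℝ n f := hf.of_le (by exact_mod_cast Nat.le_succ n)
    have hcont1 : Continuous (iteratedDeriv (n + 1) f) :=
      hf.continuous_iteratedDeriv (n + 1) (by exact_mod_cast le_rfl)
    have hcont0 : Continuous (iteratedDeriv n f) :=
      hf.continuous_iteratedDeriv n (by exact_mod_cast Nat.le_succ n)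
    have hlrest : ∀ i j : ℕ, i ≤ n → j ≤ n → i ≠ j → l i ≠ l j :=
      fun i j hi hj hij => hl i j (le_trans hi (Nat.le_succ n)) (le_trans hj (Nat.le_succ n)) hij
    have hupd : ∀ i j : ℕ, i ≤ n → j ≤ n → i ≠ j →
        Function.update l n (l (n + 1)) i ≠ Function.update l n (l (n + 1)) j := by
      intro i j hi hj hij
      rcases eq_or_ne i n with hin | hin
      · have hjn : j ≠ n := fun h => hij (hin.trans h.symm)
        rw [hin, Function.update_self, Function.update_of_ne hjn]
        exact hl (n + 1) j le_rfl (by omega) (by omega)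
      · rw [Function.update_of_ne hin]
        rcases eq_or_ne j n with hjn | hjn
        · rw [hjn, Function.update_self]
          exact hl i (n + 1) (by omega) le_rfl (by omega)
        · rw [Function.update_of_ne hjn]
          exact hlrest i j hi hj hij
    rw [divDiff, IH f hfn _ hupd, IH f hfn l hlrest]
    rcases Nat.eq_zero_or_pos n with hn | hn
    · subst hn
      rw [star_step 0 f hf l (hl 1 0 (by omega) (by omega) (by omega))]
    · -- n ≥ 1 : use the simplex reflection
      set p := swapl l n with hp
      have hp1 : p (n + 1) = l (n + 1) := by
        rw [hp, swapl]
        rw [if_neg (by omega), if_neg (by omega)]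
      have hp0 : p 0 = l n := by rw [hp, swapl, if_pos rfl]
      have h0p : p (n + 1) ≠ p 0 := by
        rw [hp1, hp0]
        exact hl (n + 1) n le_rfl (Nat.le_succ n) (by omega)
      have e1 : (∫ s in Smplx (n + 1), iteratedDeriv (n + 1) f (nodal (n + 1) l s))
          = ∫ s in Smplx (n + 1), iteratedDeriv (n + 1) f (nodal (n + 1) p s) :=
        (swapIntegral (n + 1) n hn (Nat.le_succ n) hcont1 l).symm
      have e3 : Function.update p 0 (p (n + 1)) = swapl (Function.update l n (l (n + 1))) n := by
        funext m
        rcases eq_or_ne m 0 with rfl | hm0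
        · rw [Function.update_self, hp1, swapl, if_pos rfl, Function.update_self]
        · rw [Function.update_of_ne hm0]
          rcases eq_or_ne m n with rfl | hmn
          · rw [hp, swapl, if_neg hm0, if_pos rfl, swapl, if_neg hm0, if_pos rfl,
              Function.update_of_ne (by omega)]
          · rw [hp, swapl, if_neg hm0, if_neg hmn, swapl, if_neg hm0, if_neg hmn,
              Function.update_of_ne hmn]
      have e4 : (∫ s in Smplx n, iteratedDeriv n f
            (nodal n (swapl (Function.update l n (l (n + 1))) n) s))
          = ∫ s in Smplx n, iteratedDeriv n f (nodal n (Function.update l n (l (n + 1))) s) :=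
        swapIntegral n n hn le_rfl hcont0 _
      have e5 : (∫ s in Smplx n, iteratedDeriv n f (nodal n p s))
          = ∫ s in Smplx n, iteratedDeriv n f (nodal n l s) :=
        swapIntegral n n hn le_rfl hcont0 l
      rw [e1, star_step n f hf p h0p, e3, hp1, hp0, e4, e5]


/-- If `f ∈ Cⁿ(ℝ)` and `f⁽ⁿ⁾(x) = ∫ e^{itx} g(t) dt` with `g = \widehat{f⁽ⁿ⁾}`
integrable, then
`f^{[n]}(λ₀,…,λₙ) = ∫_{Δₙ} ∫_ℝ e^{its₀λ₀} ⋯ e^{itsₙλₙ} g(t) dt dσ(s)`,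
where the `n`-simplex `Δₙ = {s ∈ ℝ_{≥0}^{n+1} : ∑ sᵢ = 1}` is parametrized by
`(s₁,…,sₙ)` with `s₀ = 1 − s₁ − ⋯ − sₙ`, and `σ` is its Lebesgue surface
measure (of total mass `1/n!`). -/
theorem divDiff_integral_repr (n : ℕ) (f : ℝ → ℂ) (hf : ContDiff ℝ n f)
    (g : ℝ → ℂ) (hg : Integrable g (volume : Measure ℝ))
    (hrepr : ∀ x : ℝ, iteratedDeriv n f x = ∫ t : ℝ, Complex.exp (Complex.I * t * x) * g t)
    (l : ℕ → ℝ) (hl : ∀ i j : ℕ, i ≤ n → j ≤ n → i ≠ j → l i ≠ l j) :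
    divDiff f n l
      = ∫ s in {s : Fin n → ℝ | (∀ i, 0 ≤ s i) ∧ (∑ i, s i) ≤ 1},
          ∫ t : ℝ,
            Complex.exp (Complex.I * t *
              (((1 - ∑ i, s i) * l 0 + ∑ i : Fin n, s i * l (i.1 + 1) : ℝ) : ℂ)) * g t := by
  rw [hermite_genocchi n f hf l hl]
  exact setIntegral_congr_fun (measurableSet_Smplx n) fun s _ => hrepr (nodal n l s)
end
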